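/- In a residuated lattice, for any subset X of A, the filter generated by X equals the intersection of all prime filters containing X. -/
import Mathlib


universe u

class ResiduatedLattice (A : Type u) extends Lattice A, BoundedOrder A where
  mul : A → A → A
  himp : A → A → A
  mul_comm : ∀ x y : A, mul x y = mul y x
  mul_assoc : ∀ x y z : A, mul (mul x y) z = mul x (mul y z)
  mul_top : ∀ x : A, mul x ⊤ = x
  adjoint : ∀ x y z : A, mul x y ≤ z ↔ x ≤ himp y z

namespace RL

variable {A : Type u} [ResiduatedLattice A]

/-- A filter: a nonempty subset closed under the monoid operation `⊙` and closed
under joins with arbitrary elements. -/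
def IsFilter (F : Set A) : Prop :=
  F.Nonempty ∧ (∀ x ∈ F, ∀ y ∈ F, ResiduatedLattice.mul x y ∈ F) ∧
    (∀ x ∈ F, ∀ y : A, x ⊔ y ∈ F)

/-- A prime filter: a proper filter such that `x ⊔ y ∈ P` implies `x ∈ P` or `y ∈ P`. -/
def IsPrime (P : Set A) : Prop :=
  IsFilter P ∧ P ≠ Set.univ ∧ ∀ x y : A, x ⊔ y ∈ P → x ∈ P ∨ y ∈ P

/-- The filter generated by a subset `X`. -/
def Fgen (X : Set A) : Set A := ⋂₀ {G : Set A | IsFilter G ∧ X ⊆ G}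

/-- An `X`-minimal prime filter: a minimal element of the set of prime filters containing `X`. -/
def MinPrimeOver (X : Set A) (P : Set A) : Prop :=
  IsPrime P ∧ X ⊆ P ∧ ∀ Q : Set A, IsPrime Q → X ⊆ Q → Q ⊆ P → Q = P

/-- A minimal prime filter. -/
def MinPrime (P : Set A) : Prop :=
  IsPrime P ∧ ∀ Q : Set A, IsPrime Q → Q ⊆ P → Q = P

/-- The coannihilator of `X` belonging to `F`. -/
def coann (F : Set A) (X : Set A) : Set A := {a : A | ∀ x ∈ X, x ⊔ a ∈ F}

/-- `X^⊥ = {a | x ⊔ a = ⊤ for all x ∈ X}`. -/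
def perp (X : Set A) : Set A := {a : A | ∀ x ∈ X, x ⊔ a = ⊤}

/-- `D_F(P) = {a | (F : a) ⊄ P}`. -/
def DF (F P : Set A) : Set A := {a : A | ¬ coann F {a} ⊆ P}

/-- A `∨`-closed subset: nonempty and closed under joins. -/
def VClosed (C : Set A) : Prop := C.Nonempty ∧ ∀ x ∈ C, ∀ y ∈ C, x ⊔ y ∈ C

end RL

namespace RLproof

variable {A : Type u} [ResiduatedLattice A]

local infixl:70 " ⊙ " => ResiduatedLattice.mul

lemma mul_le_mul_left' {x y : A} (z : A) (h : x ≤ y) : x ⊙ z ≤ y ⊙ z := by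
  have hy : y ≤ ResiduatedLattice.himp z (y ⊙ z) :=
    (ResiduatedLattice.adjoint y z (y ⊙ z)).mp le_rfl
  exact (ResiduatedLattice.adjoint x z (y ⊙ z)).mpr (le_trans h hy)

lemma mul_le_mul_right' (x : A) {y z : A} (h : y ≤ z) : x ⊙ y ≤ x ⊙ z := by
  rw [ResiduatedLattice.mul_comm x y, ResiduatedLattice.mul_comm x z]
  exact mul_le_mul_left' x h

lemma mul_le_left (x y : A) : x ⊙ y ≤ x := by
  have := mul_le_mul_right' x (le_top : y ≤ ⊤)
  rwa [ResiduatedLattice.mul_top] at this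

lemma mul_le_right (x y : A) : x ⊙ y ≤ y := by
  rw [ResiduatedLattice.mul_comm]; exact mul_le_left y x

lemma sup_mul (x y z : A) : (x ⊔ y) ⊙ z = x ⊙ z ⊔ y ⊙ z := by
  apply le_antisymm
  · apply (ResiduatedLattice.adjoint _ _ _).mpr
    apply sup_le
    · exact (ResiduatedLattice.adjoint _ _ _).mp le_sup_left
    · exact (ResiduatedLattice.adjoint _ _ _).mp le_sup_right
  · exact sup_le (mul_le_mul_left' z le_sup_left) (mul_le_mul_left' z le_sup_right)

lemma mul_left_comm' (a b c : A) : a ⊙ (b ⊙ c) = b ⊙ (a ⊙ c) := by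
  rw [← ResiduatedLattice.mul_assoc, ResiduatedLattice.mul_comm a b,
    ResiduatedLattice.mul_assoc]

lemma mul_mul_mul_comm' (a b c d : A) : (a ⊙ b) ⊙ (c ⊙ d) = (a ⊙ c) ⊙ (b ⊙ d) := by
  rw [ResiduatedLattice.mul_assoc, mul_left_comm' b c d, ← ResiduatedLattice.mul_assoc]

/-- powers -/
def rpow (x : A) : ℕ → A
  | 0 => ⊤
  | n + 1 => rpow x n ⊙ x

lemma rpow_mul_rpow (x : A) (m n : ℕ) :
    rpow x m ⊙ rpow x n = rpow x (m + n) := by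
  induction n with
  | zero => simp [rpow, ResiduatedLattice.mul_top]
  | succ n ih =>
      show rpow x m ⊙ (rpow x n ⊙ x) = rpow x (m + n) ⊙ x
      rw [← ResiduatedLattice.mul_assoc, ih]

lemma rpow_sup_le (x y : A) : ∀ k n m : ℕ, n + m ≤ k →
    rpow (x ⊔ y) (n + m) ≤ rpow x n ⊔ rpow y m := by
  intro k
  induction k with
  | zero =>
      intro n m h
      have hn : n = 0 := by omega
      have hm : m = 0 := by omega
      subst hn; subst hm
      simp [rpow]
  | succ k ih =>
      intro n m h
      cases n with
      | zero => exact le_trans le_top le_sup_left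
      | succ n =>
        cases m with
        | zero => exact le_trans le_top le_sup_right
        | succ m =>
            have hs : n + 1 + (m + 1) = (n + (m + 1)) + 1 := by omega
            rw [hs]
            show rpow (x ⊔ y) (n + (m + 1)) ⊙ (x ⊔ y) ≤ _
            calc rpow (x ⊔ y) (n + (m + 1)) ⊙ (x ⊔ y)
                = rpow (x ⊔ y) (n + (m + 1)) ⊙ x ⊔ rpow (x ⊔ y) (n + (m + 1)) ⊙ y := by
                  rw [ResiduatedLattice.mul_comm, sup_mul,
                    ResiduatedLattice.mul_comm x, ResiduatedLattice.mul_comm y]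
              _ ≤ (rpow x n ⊔ rpow y (m + 1)) ⊙ x ⊔ (rpow x (n + 1) ⊔ rpow y m) ⊙ y := by
                  apply sup_le_sup
                  · exact mul_le_mul_left' x (ih n (m + 1) (by omega))
                  · have h2 : n + (m + 1) = (n + 1) + m := by omega
                    rw [h2]
                    exact mul_le_mul_left' y (ih (n + 1) m (by omega))
              _ ≤ rpow x (n + 1) ⊔ rpow y (m + 1) := by
                  rw [sup_mul, sup_mul]
                  apply sup_le <;> apply sup_le
                  · exact le_sup_left
                  · exact le_trans (mul_le_left _ _) le_sup_right
                  · exact le_trans (mul_le_left _ _) le_sup_left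
                  · exact le_sup_right

lemma top_mem_filter {F : Set A} (hF : RL.IsFilter F) : (⊤ : A) ∈ F := by
  obtain ⟨⟨g, hg⟩, _, hsup⟩ := hF
  have := hsup g hg ⊤
  rwa [sup_top_eq] at this

lemma filter_upward {F : Set A} (hF : RL.IsFilter F) {x y : A} (hx : x ∈ F) (h : x ≤ y) :
    y ∈ F := by
  have := hF.2.2 x hx y
  rwa [sup_eq_right.mpr h] at this

lemma rpow_mem {F : Set A} (hF : RL.IsFilter F) {x : A} (hx : x ∈ F) (n : ℕ) :
    rpow x n ∈ F := by
  induction n with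
  | zero => exact top_mem_filter hF
  | succ n ih => exact hF.2.1 _ ih _ hx

/-- The extension of a filter by an element. -/
def ext (M : Set A) (x : A) : Set A := {z : A | ∃ p ∈ M, ∃ n : ℕ, p ⊙ rpow x n ≤ z}

lemma subset_ext {M : Set A} (x : A) : M ⊆ ext M x := by
  intro p hp
  exact ⟨p, hp, 0, le_of_eq (ResiduatedLattice.mul_top p)⟩

lemma mem_ext {M : Set A} (hM : RL.IsFilter M) (x : A) : x ∈ ext M x := by
  refine ⟨⊤, top_mem_filter hM, 1, ?_⟩
  show (⊤ : A) ⊙ ((⊤ : A) ⊙ x) ≤ x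
  exact le_trans (mul_le_right _ _) (mul_le_right _ _)

lemma ext_isFilter {M : Set A} (hM : RL.IsFilter M) (x : A) : RL.IsFilter (ext M x) := by
  refine ⟨⟨x, mem_ext hM x⟩, ?_, ?_⟩
  · rintro z1 ⟨p1, hp1, n1, h1⟩ z2 ⟨p2, hp2, n2, h2⟩
    refine ⟨p1 ⊙ p2, hM.2.1 _ hp1 _ hp2, n1 + n2, ?_⟩
    calc (p1 ⊙ p2) ⊙ rpow x (n1 + n2) = (p1 ⊙ p2) ⊙ (rpow x n1 ⊙ rpow x n2) := by
          rw [rpow_mul_rpow]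
      _ = (p1 ⊙ rpow x n1) ⊙ (p2 ⊙ rpow x n2) := mul_mul_mul_comm' _ _ _ _
      _ ≤ z1 ⊙ z2 := le_trans (mul_le_mul_left' _ h1) (mul_le_mul_right' _ h2)
  · rintro z ⟨p, hp, n, h⟩ w
    exact ⟨p, hp, n, le_trans h le_sup_left⟩

theorem fgen_eq_sInter_primes' {A : Type u} [ResiduatedLattice A] (X : Set A) :
    RL.Fgen X = ⋂₀ {P : Set A | RL.IsPrime P ∧ X ⊆ P} := by
  have hFgenFilter : RL.IsFilter (RL.Fgen X) := by
    refine ⟨⟨⊤, ?_⟩, ?_, ?_⟩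
    · intro G hG; exact top_mem_filter hG.1
    · intro u hu v hv G hG
      exact hG.1.2.1 u (hu G hG) v (hv G hG)
    · intro u hu v G hG
      exact hG.1.2.2 u (hu G hG) v
  have hXsub : X ⊆ RL.Fgen X := by
    intro t ht G hG; exact hG.2 ht
  apply le_antisymm
  · -- Fgen X ⊆ every prime over X
    intro b hb P hP
    exact hb P ⟨hP.1.1, hP.2⟩
  · -- ⊇ : if a in every prime over X, then a ∈ Fgen X
    intro a ha
    by_contra hnot
    have hnot' : a ∉ RL.Fgen X := hnot
    -- Zorn
    set S : Set (Set A) := {G : Set A | RL.IsFilter G ∧ X ⊆ G ∧ a ∉ G} with hS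
    have hFgenS : RL.Fgen X ∈ S := ⟨hFgenFilter, hXsub, hnot'⟩
    have zchain : ∀ c ⊆ S, IsChain (· ⊆ ·) c → c.Nonempty →
        ∃ ub ∈ S, ∀ s ∈ c, s ⊆ ub := by
      rintro c hcS hchain ⟨G0, hG0⟩
      refine ⟨⋃₀ c, ⟨⟨⟨⊤, G0, hG0, top_mem_filter (hcS hG0).1⟩, ?_, ?_⟩, ?_, ?_⟩,
        fun s hs => Set.subset_sUnion_of_mem hs⟩
      · rintro u ⟨G1, hG1, hu⟩ v ⟨G2, hG2, hv⟩
        rcases hchain.total hG1 hG2 with h12 | h21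
        · exact ⟨G2, hG2, (hcS hG2).1.2.1 u (h12 hu) v hv⟩
        · exact ⟨G1, hG1, (hcS hG1).1.2.1 u hu v (h21 hv)⟩
      · rintro u ⟨G1, hG1, hu⟩ v
        exact ⟨G1, hG1, (hcS hG1).1.2.2 u hu v⟩
      · intro t ht; exact ⟨G0, hG0, (hcS hG0).2.1 ht⟩
      · rintro ⟨G1, hG1, haG1⟩
        exact (hcS hG1).2.2 haG1
    obtain ⟨m, hsubm, hmax⟩ := zorn_subset_nonempty S zchain (RL.Fgen X) hFgenS
    have hmF : RL.IsFilter m := hmax.1.1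
    have hmX : X ⊆ m := hmax.1.2.1
    have hma : a ∉ m := hmax.1.2.2
    -- key: if x ∉ m then a ∈ ext m x
    have key : ∀ x : A, x ∉ m → ∃ p ∈ m, ∃ n : ℕ, p ⊙ rpow x n ≤ a := by
      intro x hx
      by_contra hne
      have haext : a ∉ ext m x := by
        rintro ⟨p, hp, n, h⟩; exact hne ⟨p, hp, n, h⟩
      have hextS : ext m x ∈ S :=
        ⟨ext_isFilter hmF x, le_trans hmX (subset_ext x), haext⟩
      have := hmax.2 hextS (subset_ext x)
      exact hx (this (mem_ext hmF x))
    -- m is prime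
    have hprime : RL.IsPrime m := by
      refine ⟨hmF, ?_, ?_⟩
      · intro heq
        exact hma (heq ▸ Set.mem_univ a)
      · intro x y hxy
        by_contra hor
        push_neg at hor
        obtain ⟨hx, hy⟩ := hor
        obtain ⟨p1, hp1, n1, h1⟩ := key x hx
        obtain ⟨p2, hp2, n2, h2⟩ := key y hy
        set p := p1 ⊙ p2 with hp
        have hpm : p ∈ m := hmF.2.1 _ hp1 _ hp2
        have hq : p ⊙ rpow (x ⊔ y) (n1 + n2) ∈ m :=
          hmF.2.1 _ hpm _ (rpow_mem hmF hxy (n1 + n2))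
        have hle : p ⊙ rpow (x ⊔ y) (n1 + n2) ≤ a := by
          calc p ⊙ rpow (x ⊔ y) (n1 + n2)
              ≤ p ⊙ (rpow x n1 ⊔ rpow y n2) :=
                mul_le_mul_right' p (rpow_sup_le x y (n1 + n2) n1 n2 le_rfl)
            _ = p ⊙ rpow x n1 ⊔ p ⊙ rpow y n2 := by
                rw [ResiduatedLattice.mul_comm, sup_mul,
                  ResiduatedLattice.mul_comm (rpow x n1), ResiduatedLattice.mul_comm (rpow y n2)]
            _ ≤ a := by
                apply sup_le
                · exact le_trans (mul_le_mul_left' _ (mul_le_left p1 p2)) h1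
                · exact le_trans (mul_le_mul_left' _ (mul_le_right p1 p2)) h2
        exact hma (filter_upward hmF hq hle)
    exact hma (ha m ⟨hprime, hmX⟩)

end RLproof

theorem fgen_eq_sInter_primes {A : Type u} [ResiduatedLattice A] (X : Set A) :
    RL.Fgen X = ⋂₀ {P : Set A | RL.IsPrime P ∧ X ⊆ P} := by
  exact RLproof.fgen_eq_sInter_primes' X
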